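/- arXiv:2207.03836 — 2 statements merged into one kernel-verified Lean document; each statement's English description precedes it below -/
import Mathlib

section
/- Let {a_j}_{j≥1} be a non-increasing sequence of positive reals with ∑_{j=1}^∞ a_j = ∞, and define c_j = min{1/j, max{a_j, 1/j²}}. Then ∑_{j=1}^∞ c_j = ∞. -/
set_option maxHeartbeats 1000000 in
theorem c_seq_divergent
    (a : ℕ → ℝ) (hpos : ∀ j, 1 ≤ j → 0 < a j)
    (hmono : AntitoneOn a (Set.Ici 1))
    (hdiv : ¬ Summable (fun j : ℕ => a (j + 1))) :
    ¬ Summable (fun j : ℕ =>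
      min (1 / ((j : ℝ) + 1)) (max (a (j + 1)) (1 / ((j : ℝ) + 1) ^ 2))) := by
  -- modified version of `a`, positive everywhere
  set a' : ℕ → ℝ := fun j => if j = 0 then 1 else a j with ha'
  have ha'pos : ∀ j, 0 < a' j := by
    intro j
    rcases Nat.eq_zero_or_pos j with h | h
    · simp [ha', h]
    · simpa [ha', Nat.pos_iff_ne_zero.mp h] using hpos j h
  have ha'mono : ∀ ⦃m n : ℕ⦄, 0 < m → m ≤ n → a' n ≤ a' m := by
    intro m n hm hmn
    have hn : 0 < n := lt_of_lt_of_le hm hmn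
    simp only [ha', Nat.pos_iff_ne_zero.mp hm, Nat.pos_iff_ne_zero.mp hn, if_neg,
      ite_false]
    exact hmono hm hn hmn
  -- `a'` is not summable
  have hdiv' : ¬ Summable a' := by
    intro h
    apply hdiv
    have := (summable_nat_add_iff 1).mpr h
    refine this.congr fun j => ?_
    simp [ha']
  -- condensed series of `a'` is not summable
  have hacond : ¬ Summable (fun k : ℕ => (2 : ℝ) ^ k * a' (2 ^ k)) := by
    intro h
    exact hdiv' ((summable_condensed_iff_of_nonneg (fun n => (ha'pos n).le) ha'mono).mp h)
  -- the auxiliary sequence g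
  set g : ℕ → ℝ := fun j => if j = 0 then 1 else min (1 / (j : ℝ)) (a' j) with hg
  have hgpos : ∀ j, 0 < g j := by
    intro j
    rcases Nat.eq_zero_or_pos j with h | h
    · simp [hg, h]
    · have hj : (0 : ℝ) < j := by exact_mod_cast h
      simp only [hg, Nat.pos_iff_ne_zero.mp h, ite_false]
      exact lt_min (by positivity) (ha'pos j)
  have hgmono : ∀ ⦃m n : ℕ⦄, 0 < m → m ≤ n → g n ≤ g m := by
    intro m n hm hmn
    have hn : 0 < n := lt_of_lt_of_le hm hmn
    simp only [hg, Nat.pos_iff_ne_zero.mp hm, Nat.pos_iff_ne_zero.mp hn, ite_false]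
    refine min_le_min ?_ (ha'mono hm hmn)
    apply one_div_le_one_div_of_le
    · exact_mod_cast hm
    · exact_mod_cast hmn
  -- g is not summable
  have hgdiv : ¬ Summable g := by
    intro hgsum
    have hcond : Summable fun k : ℕ => (2 : ℝ) ^ k * g (2 ^ k) :=
      (summable_condensed_iff_of_nonneg (fun n => (hgpos n).le) hgmono).mpr hgsum
    -- the condensed terms are `min 1 (2^k * a' (2^k))`
    have hterm : ∀ k : ℕ, (2 : ℝ) ^ k * g (2 ^ k) = min 1 ((2 : ℝ) ^ k * a' (2 ^ k)) := by
      intro k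
      have h2k : (2 : ℕ) ^ k ≠ 0 := by positivity
      have h2kR : ((2 : ℕ) ^ k : ℝ) = (2 : ℝ) ^ k := by push_cast; ring
      simp only [hg, h2k, ite_false, h2kR]
      rw [mul_min_of_nonneg _ _ (by positivity : (0:ℝ) ≤ (2:ℝ)^k)]
      congr 1
      field_simp
      norm_num
    -- the terms tend to zero, so eventually equal `2^k * a' (2^k)`
    have htend : Filter.Tendsto (fun k : ℕ => (2 : ℝ) ^ k * g (2 ^ k))
        Filter.atTop (nhds 0) := hcond.tendsto_atTop_zero
    have hev : ∀ᶠ k in Filter.atTop, (2 : ℝ) ^ k * g (2 ^ k) < 1 := by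
      have := htend.eventually (eventually_lt_nhds zero_lt_one)
      exact this
    rcases hev.exists_forall_of_atTop with ⟨N, hN⟩
    apply hacond
    rw [← summable_nat_add_iff N]
    have : Summable (fun k : ℕ => (2 : ℝ) ^ (k + N) * g (2 ^ (k + N))) :=
      (summable_nat_add_iff N).mpr hcond
    refine this.congr fun k => ?_
    have h1 : (2 : ℝ) ^ (k + N) * g (2 ^ (k + N)) < 1 := hN (k + N) (Nat.le_add_left _ _)
    rw [hterm (k + N)] at h1 ⊢
    rcases min_cases (1 : ℝ) ((2 : ℝ) ^ (k + N) * a' (2 ^ (k + N))) with ⟨h, _⟩ | ⟨h, _⟩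
    · rw [h] at h1; linarith
    · exact h
  -- now conclude
  intro hsum
  apply hgdiv
  rw [← summable_nat_add_iff 1]
  refine Summable.of_nonneg_of_le (fun j => (hgpos (j + 1)).le) (fun j => ?_) hsum
  have hj1 : (j : ℕ) + 1 ≠ 0 := Nat.succ_ne_zero j
  simp only [hg, hj1, ite_false, ha', Nat.succ_ne_zero]
  push_cast
  exact min_le_min le_rfl (le_max_left _ _)
end

section
/- Suppose (X, μ) is a probability space, 0 < δ < 1, C̃ ≥ 1, D, D' > 0, and (B_k) are measurable sets with ∑_{k=1}^∞ μ(B_k) = ∞ such that for all n and N ≥ n, ∑_{i,j=n}^N μ(B_i ∩ B_j) ≤ C̃·[D·∑_{k=n}^N μ(B_k) + D' + (∑_{k=n}^N μ(B_k))²]. Then μ(limsup B_k) ≥ 1/C̃ > 0. -/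
open MeasureTheory Filter Topology
open scoped ENNReal

/-- **Chung–Erdős inequality** (multiplied-out form, in `ℝ≥0∞`). -/
lemma chung_erdos_aux {X : Type*} [MeasurableSpace X] (μ : Measure X)
    (B : ℕ → Set X) (hmeas : ∀ k, MeasurableSet (B k)) (s : Finset ℕ) :
    (∑ i ∈ s, μ (B i)) ^ 2 ≤ μ (⋃ i ∈ s, B i) * ∑ i ∈ s, ∑ j ∈ s, μ (B i ∩ B j) := by
  classical
  set f : X → ℝ≥0∞ := fun x => ∑ i ∈ s, (B i).indicator 1 x with hf
  set U : Set X := ⋃ i ∈ s, B i with hU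
  have hUmeas : MeasurableSet U := s.measurableSet_biUnion (fun i _ => hmeas i)
  have hfm : Measurable f := by
    apply Finset.measurable_sum
    exact fun i _ => measurable_one.indicator (hmeas i)
  have hgm : Measurable (U.indicator (1 : X → ℝ≥0∞)) := measurable_one.indicator hUmeas
  have hconj : Real.HolderConjugate 2 2 := Real.holderConjugate_iff.mpr ⟨one_lt_two, by norm_num⟩
  have key := ENNReal.lintegral_mul_le_Lp_mul_Lq μ hconj hfm.aemeasurable hgm.aemeasurable
  simp only [Pi.mul_apply] at key
  -- f * g = f
  have hfg : ∀ x, f x * U.indicator 1 x = f x := by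
    intro x
    by_cases hx : x ∈ U
    · simp [Set.indicator_of_mem hx]
    · have h0 : f x = 0 := Finset.sum_eq_zero fun i hi =>
        Set.indicator_of_notMem (fun hxB => hx (Set.mem_biUnion hi hxB)) _
      simp [h0]
  have hS : ∫⁻ x, f x * U.indicator 1 x ∂μ = ∑ i ∈ s, μ (B i) := by
    simp only [hfg]
    rw [hf]
    rw [lintegral_finset_sum _ (fun i _ => measurable_one.indicator (hmeas i))]
    simp [lintegral_indicator_one (hmeas _)]
  have hT : ∫⁻ x, f x ^ (2 : ℝ) ∂μ = ∑ i ∈ s, ∑ j ∈ s, μ (B i ∩ B j) := by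
    have hsq : ∀ x, f x ^ (2 : ℝ) =
        ∑ i ∈ s, ∑ j ∈ s, ((B i ∩ B j).indicator (1 : X → ℝ≥0∞)) x := by
      intro x
      rw [ENNReal.rpow_two, sq, hf]
      rw [Finset.sum_mul_sum]
      refine Finset.sum_congr rfl fun i _ => Finset.sum_congr rfl fun j _ => ?_
      rw [Set.inter_indicator_one]
      rfl
    simp only [hsq]
    rw [lintegral_finset_sum _ (fun i _ => Finset.measurable_sum _
      (fun j _ => measurable_one.indicator ((hmeas i).inter (hmeas j))))]
    refine Finset.sum_congr rfl fun i _ => ?_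
    rw [lintegral_finset_sum _ (fun j _ => measurable_one.indicator ((hmeas i).inter (hmeas j)))]
    simp [lintegral_indicator_one ((hmeas _).inter (hmeas _))]
  have hG : ∫⁻ x, U.indicator (1 : X → ℝ≥0∞) x ^ (2 : ℝ) ∂μ = μ U := by
    have : ∀ x, U.indicator (1 : X → ℝ≥0∞) x ^ (2 : ℝ) = U.indicator 1 x := by
      intro x
      by_cases hx : x ∈ U
      · simp [Set.indicator_of_mem hx]
      · simp [Set.indicator_of_notMem hx, ENNReal.zero_rpow_of_pos (by norm_num : (0:ℝ) < 2)]
    simp only [this, lintegral_indicator_one hUmeas]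
  rw [hS, hT, hG] at key
  -- key : S ≤ T ^ (1/2) * (μ U) ^ (1/2)
  calc (∑ i ∈ s, μ (B i)) ^ 2
      ≤ ((∑ i ∈ s, ∑ j ∈ s, μ (B i ∩ B j)) ^ (1/2 : ℝ) * μ U ^ (1/2 : ℝ)) ^ 2 := by
        exact pow_le_pow_left' key 2
    _ = μ U * ∑ i ∈ s, ∑ j ∈ s, μ (B i ∩ B j) := by
        rw [mul_pow, ← ENNReal.rpow_two, ← ENNReal.rpow_two,
          ← ENNReal.rpow_mul, ← ENNReal.rpow_mul]
        norm_num [mul_comm]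

theorem limsup_measure_lower_bound
    {X : Type*} [MeasurableSpace X] (μ : Measure X) [IsProbabilityMeasure μ]
    (δ : ℝ) (hδ0 : 0 < δ) (hδ1 : δ < 1)
    (Ct D D' : ℝ) (hCt : 1 ≤ Ct) (hD : 0 < D) (hD' : 0 < D')
    (B : ℕ → Set X) (hmeas : ∀ k, MeasurableSet (B k))
    (hdiv : ∑' k : ℕ, μ (B k) = ⊤)
    (hbound : ∀ n N : ℕ, n ≤ N →
      ∑ i ∈ Finset.Icc n N, ∑ j ∈ Finset.Icc n N, (μ (B i ∩ B j)).toReal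
        ≤ Ct * (D * ∑ k ∈ Finset.Icc n N, (μ (B k)).toReal + D'
            + (∑ k ∈ Finset.Icc n N, (μ (B k)).toReal) ^ 2)) :
    ENNReal.ofReal (1 / Ct) ≤ μ (⋂ n, ⋃ k, ⋃ (_ : n ≤ k), B k) ∧
      0 < μ (⋂ n, ⋃ k, ⋃ (_ : n ≤ k), B k) := by
  have hCt0 : (0:ℝ) < Ct := lt_of_lt_of_le one_pos hCt
  set U : ℕ → Set X := fun n => ⋃ k, ⋃ (_ : n ≤ k), B k with hUdef
  -- real partial sums tend to infinity
  have hns : ¬ Summable (fun k => (μ (B k)).toReal) := by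
    intro hsum
    have := ENNReal.ofReal_tsum_of_nonneg (fun k => ENNReal.toReal_nonneg) hsum
    have heq : ∀ k, ENNReal.ofReal ((μ (B k)).toReal) = μ (B k) := fun k =>
      ENNReal.ofReal_toReal (measure_ne_top μ _)
    simp only [heq] at this
    rw [hdiv] at this
    exact ENNReal.ofReal_ne_top this
  have hrange : Tendsto (fun N => ∑ k ∈ Finset.range N, (μ (B k)).toReal) atTop atTop :=
    (not_summable_iff_tendsto_nat_atTop_of_nonneg (fun k => ENNReal.toReal_nonneg)).1 hns
  -- the limit function
  have hφ : Tendsto (fun x : ℝ => x ^ 2 / (Ct * (D * x + D' + x ^ 2))) atTop (𝓝 (1 / Ct)) := by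
    have h1 : Tendsto (fun x : ℝ => 1 / (Ct * (D * x⁻¹ + D' * (x⁻¹)^2 + 1))) atTop
        (𝓝 (1 / Ct)) := by
      have hx : Tendsto (fun x : ℝ => Ct * (D * x⁻¹ + D' * (x⁻¹)^2 + 1)) atTop
          (𝓝 (Ct * (D * 0 + D' * 0^2 + 1))) := by
        apply Tendsto.const_mul
        exact (((tendsto_inv_atTop_zero.const_mul D).add
          ((tendsto_inv_atTop_zero.pow 2).const_mul D')).add tendsto_const_nhds)
      have hne : Ct * (D * 0 + D' * 0^2 + 1) ≠ 0 := by positivity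
      have h2 : Tendsto (fun x : ℝ => 1 / (Ct * (D * x⁻¹ + D' * (x⁻¹)^2 + 1))) atTop
          (𝓝 (1 / (Ct * (D * 0 + D' * 0^2 + 1)))) :=
        Filter.Tendsto.div tendsto_const_nhds hx hne
      have heq : (1 : ℝ) / (Ct * (D * 0 + D' * 0^2 + 1)) = 1 / Ct := by norm_num
      exact heq ▸ h2
    refine h1.congr' ?_
    filter_upwards [eventually_gt_atTop (0:ℝ)] with x hx
    have hx0 : x ≠ 0 := ne_of_gt hx
    field_simp
  -- main estimate for each tail union
  have hmain : ∀ n, ENNReal.ofReal (1 / Ct) ≤ μ (U n) := by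
    intro n
    have hUm : MeasurableSet (U n) := MeasurableSet.iUnion fun k =>
      MeasurableSet.iUnion fun _ => hmeas k
    have hμfin : μ (U n) ≠ ⊤ := measure_ne_top μ _
    set m : ℝ := (μ (U n)).toReal with hm
    -- pointwise bound: φ (a N) ≤ m for N ≥ n
    have hpt : ∀ N, n ≤ N →
        (∑ k ∈ Finset.Icc n N, (μ (B k)).toReal) ^ 2 /
          (Ct * (D * ∑ k ∈ Finset.Icc n N, (μ (B k)).toReal + D'
            + (∑ k ∈ Finset.Icc n N, (μ (B k)).toReal) ^ 2)) ≤ m := by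
      intro N hN
      set a : ℝ := ∑ k ∈ Finset.Icc n N, (μ (B k)).toReal with ha
      have ha0 : 0 ≤ a := Finset.sum_nonneg fun _ _ => ENNReal.toReal_nonneg
      have hd0 : 0 < Ct * (D * a + D' + a ^ 2) := by positivity
      rw [div_le_iff₀ hd0]
      -- ENNReal Chung–Erdős
      have hce := chung_erdos_aux μ B hmeas (Finset.Icc n N)
      have hsub : (⋃ i ∈ Finset.Icc n N, B i) ⊆ U n := by
        intro x hx
        obtain ⟨i, hi, hxi⟩ := Set.mem_iUnion₂.1 hx
        exact Set.mem_iUnion₂.2 ⟨i, (Finset.mem_Icc.1 hi).1, hxi⟩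
      have hce' : (∑ i ∈ Finset.Icc n N, μ (B i)) ^ 2
          ≤ μ (U n) * ∑ i ∈ Finset.Icc n N, ∑ j ∈ Finset.Icc n N, μ (B i ∩ B j) :=
        hce.trans (mul_le_mul_left (measure_mono hsub) _)
      -- pass to reals
      have hSfin : (∑ i ∈ Finset.Icc n N, μ (B i)) ≠ ⊤ :=
        (ENNReal.sum_lt_top.2 fun i _ => (measure_lt_top μ _)).ne
      have hTfin : (∑ i ∈ Finset.Icc n N, ∑ j ∈ Finset.Icc n N, μ (B i ∩ B j)) ≠ ⊤ :=
        (ENNReal.sum_lt_top.2 fun i _ => (ENNReal.sum_lt_top.2 fun j _ =>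
          measure_lt_top μ _)).ne
      have hreal : a ^ 2 ≤ m *
          ∑ i ∈ Finset.Icc n N, ∑ j ∈ Finset.Icc n N, (μ (B i ∩ B j)).toReal := by
        have := ENNReal.toReal_mono (by exact ENNReal.mul_ne_top hμfin hTfin) hce'
        rw [ENNReal.toReal_pow, ENNReal.toReal_mul, ENNReal.toReal_sum
          (fun i _ => measure_ne_top μ _)] at this
        · calc a ^ 2 = (∑ i ∈ Finset.Icc n N, (μ (B i)).toReal) ^ 2 := rfl
            _ ≤ m * (∑ i ∈ Finset.Icc n N, ∑ j ∈ Finset.Icc n N, μ (B i ∩ B j)).toReal := this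
            _ = _ := by
              rw [ENNReal.toReal_sum (fun i _ => (ENNReal.sum_lt_top.2 fun j _ =>
                measure_lt_top μ _).ne)]
              refine congrArg _ (Finset.sum_congr rfl fun i _ => ?_)
              exact ENNReal.toReal_sum (fun j _ => measure_ne_top μ _)
      refine hreal.trans ?_
      have hm0 : 0 ≤ m := ENNReal.toReal_nonneg
      exact mul_le_mul_of_nonneg_left (hbound n N hN) hm0
    -- a N → ∞
    have haT : Tendsto (fun N => ∑ k ∈ Finset.Icc n N, (μ (B k)).toReal) atTop atTop := by
      have hIcc : ∀ N, n ≤ N → ∑ k ∈ Finset.Icc n N, (μ (B k)).toReal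
          = ∑ k ∈ Finset.range (N+1), (μ (B k)).toReal
            - ∑ k ∈ Finset.range n, (μ (B k)).toReal := by
        intro N hN
        rw [← Finset.Ico_add_one_right_eq_Icc, Finset.sum_Ico_eq_sub _ (show n ≤ N + 1 by omega)]
      have h1 : Tendsto (fun N => ∑ k ∈ Finset.range (N+1), (μ (B k)).toReal
          - ∑ k ∈ Finset.range n, (μ (B k)).toReal) atTop atTop :=
        tendsto_atTop_add_const_right _ _ (hrange.comp (tendsto_add_atTop_nat 1))
      refine Tendsto.congr' ?_ h1
      filter_upwards [eventually_ge_atTop n] with N hN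
      exact (hIcc N hN).symm
    -- combine
    have hlim : Tendsto (fun N => (∑ k ∈ Finset.Icc n N, (μ (B k)).toReal) ^ 2 /
        (Ct * (D * ∑ k ∈ Finset.Icc n N, (μ (B k)).toReal + D'
          + (∑ k ∈ Finset.Icc n N, (μ (B k)).toReal) ^ 2))) atTop (𝓝 (1 / Ct)) :=
      hφ.comp haT
    have : 1 / Ct ≤ m := le_of_tendsto hlim (by
      filter_upwards [eventually_ge_atTop n] with N hN using hpt N hN)
    exact ENNReal.ofReal_le_of_le_toReal this
  -- continuity from above
  have hanti : Antitone U := by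
    intro p q hpq x hx
    simp only [hUdef, Set.mem_iUnion] at hx ⊢
    obtain ⟨k, hk, hxk⟩ := hx
    exact ⟨k, le_trans hpq hk, hxk⟩
  have htend : Tendsto (μ ∘ U) atTop (𝓝 (μ (⋂ n, U n))) :=
    tendsto_measure_iInter_atTop
      (fun n => (MeasurableSet.iUnion fun k => MeasurableSet.iUnion fun _ => hmeas k).nullMeasurableSet)
      hanti ⟨0, measure_ne_top μ _⟩
  have hfinal : ENNReal.ofReal (1 / Ct) ≤ μ (⋂ n, U n) :=
    ge_of_tendsto htend (Eventually.of_forall fun n => hmain n)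
  refine ⟨hfinal, lt_of_lt_of_le ?_ hfinal⟩
  exact ENNReal.ofReal_pos.2 (by positivity)
end
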